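/- arXiv:1902.02421 — 5 statements merged into one kernel-verified Lean document; each statement's English description precedes it below -/
import Mathlib

section
/- Let (Z, λ, T) be an ergodic invertible measure-preserving system on a subset Z of [0,1] with normalized Lebesgue measure λ. Suppose there exist a constant c > 0, a sequence of integers (n_i), and sequences of measurable sets (A_i), (B_i) such that: (1) λ(A_i) > c and λ(B_i) > c for all i; (2) ∫_{A_i} |T^{n_i}x − x| dλ(x) → 0 as i → ∞; and (3) ∫_{B_i} |T^{n_i}x − Tx| dλ(x) → 0 as i → ∞. Then T is weakly mixing, i.e., T has no nonconstant measurable eigenfunctions. -/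
open MeasureTheory Filter

lemma aux_conv {μ : Measure ℝ} [IsProbabilityMeasure μ] [μ.Regular]
    (f : ℝ → ℂ) (hf1 : MemLp f 1 μ)
    (S : ℕ → Set ℝ) (hS : ∀ i, MeasurableSet (S i))
    (u w : ℕ → ℝ → ℝ)
    (hu : ∀ i, MeasurePreserving (u i) μ μ) (hw : ∀ i, MeasurePreserving (w i) μ μ)
    (hbdd : ∀ i, ∀ᵐ x ∂μ, |u i x - w i x| ≤ 1)
    (hlim : Tendsto (fun i => ∫ x in S i, |u i x - w i x| ∂μ) atTop (nhds 0)) :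
    Tendsto (fun i => ∫ x in S i, ‖f (u i x) - f (w i x)‖ ∂μ) atTop (nhds 0) := by
  have hfint : Integrable f μ := memLp_one_iff_integrable.mp hf1
  rw [NormedAddCommGroup.tendsto_nhds_zero]
  intro ε hε
  -- choose a continuous compactly supported approximation
  obtain ⟨g, gsupp, hgle, gcont, gmem⟩ :=
    hf1.exists_hasCompactSupport_eLpNorm_sub_le (p := 1) ENNReal.one_ne_top
      (ε := ENNReal.ofReal (ε / 6)) (ne_of_gt (ENNReal.ofReal_pos.mpr (by positivity)))
  obtain ⟨M, hM⟩ := gsupp.exists_bound_of_continuous gcont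
  set M' : ℝ := max M 0 with hM'
  have hM'0 : 0 ≤ M' := le_max_right _ _
  have hMle : ∀ x, ‖g x‖ ≤ M' := fun x => (hM x).trans (le_max_left _ _)
  have hgu : UniformContinuous g := gsupp.uniformContinuous_of_continuous gcont
  obtain ⟨δ, hδ, hδε⟩ := Metric.uniformContinuous_iff.mp hgu (ε / 6) (by positivity)
  set C : ℝ := 2 * M' / δ with hC
  have hC0 : 0 ≤ C := by positivity
  -- pointwise estimate for g
  have hpt : ∀ i x, ‖g (u i x) - g (w i x)‖ ≤ ε / 6 + C * |u i x - w i x| := by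
    intro i x
    rcases lt_or_ge (|u i x - w i x|) δ with h | h
    · have := hδε (a := u i x) (b := w i x) (by rwa [Real.dist_eq])
      rw [dist_eq_norm] at this
      nlinarith [abs_nonneg (u i x - w i x)]
    · have h1 : ‖g (u i x) - g (w i x)‖ ≤ 2 * M' := by
        calc ‖g (u i x) - g (w i x)‖ ≤ ‖g (u i x)‖ + ‖g (w i x)‖ := norm_sub_le _ _
        _ ≤ 2 * M' := by linarith [hMle (u i x), hMle (w i x)]
      have h2 : 2 * M' ≤ C * |u i x - w i x| := by
        rw [hC, div_mul_eq_mul_div, le_div_iff₀ hδ]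
        nlinarith
      linarith
  -- L¹ distance between f and g
  have hfg : Integrable (fun x => f x - g x) μ := hfint.sub (memLp_one_iff_integrable.mp gmem)
  have hfgnorm : ∀ v : ℝ → ℝ, MeasurePreserving v μ μ →
      ∫ x, ‖f (v x) - g (v x)‖ ∂μ ≤ ε / 6 := by
    intro v hv
    have hcomp : Integrable ((fun x => f x - g x) ∘ v) μ :=
      (hv.integrable_comp hfg.aestronglyMeasurable).mpr hfg
    have h1 : ∫ x, ‖f (v x) - g (v x)‖ ∂μ
        = (eLpNorm ((fun x => f x - g x) ∘ v) 1 μ).toReal := by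
      rw [eLpNorm_one_eq_lintegral_enorm]
      exact integral_norm_eq_lintegral_enorm hcomp.aestronglyMeasurable
    rw [h1, eLpNorm_comp_measurePreserving hfg.aestronglyMeasurable hv]
    have : eLpNorm (fun x => f x - g x) 1 μ ≤ ENNReal.ofReal (ε / 6) := by
      have : f - g = fun x => f x - g x := rfl
      rwa [this] at hgle
    exact ENNReal.toReal_le_of_le_ofReal (by positivity) this
  -- integrability of the various compositions
  have hintc : ∀ (h : ℝ → ℂ), Integrable h μ → ∀ v : ℝ → ℝ, MeasurePreserving v μ μ →
      Integrable (fun x => h (v x)) μ := fun h hh v hv =>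
    (hv.integrable_comp hh.aestronglyMeasurable).mpr hh
  have hd_int : ∀ i, Integrable (fun x => |u i x - w i x|) μ := by
    intro i
    refine Integrable.mono' (integrable_const 1)
      (((hu i).measurable.sub (hw i).measurable).abs.aestronglyMeasurable) ?_
    filter_upwards [hbdd i] with x hx
    simpa [abs_abs] using hx
  -- eventual smallness of the base integrals
  have hIev : ∀ᶠ i in atTop, ∫ x in S i, |u i x - w i x| ∂μ < ε / (6 * (C + 1)) := by
    have := (NormedAddCommGroup.tendsto_nhds_zero.mp hlim) (ε / (6 * (C + 1)))
      (by positivity)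
    filter_upwards [this] with i hi
    have h0 : 0 ≤ ∫ x in S i, |u i x - w i x| ∂μ :=
      integral_nonneg fun x => abs_nonneg _
    rwa [Real.norm_eq_abs, abs_of_nonneg h0] at hi
  filter_upwards [hIev] with i hI
  set I : ℝ := ∫ x in S i, |u i x - w i x| ∂μ with hIdef
  have hI0 : 0 ≤ I := integral_nonneg fun x => abs_nonneg _
  -- the term is nonnegative
  have hterm0 : 0 ≤ ∫ x in S i, ‖f (u i x) - f (w i x)‖ ∂μ :=
    integral_nonneg fun x => norm_nonneg _
  rw [Real.norm_eq_abs, abs_of_nonneg hterm0]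
  -- split using the triangle inequality
  have i1 : Integrable (fun x => ‖f (u i x) - g (u i x)‖) (μ.restrict (S i)) :=
    ((hintc _ hfg _ (hu i)).norm.restrict)
  have i2 : Integrable (fun x => ‖g (u i x) - g (w i x)‖) (μ.restrict (S i)) :=
    (((hintc _ (memLp_one_iff_integrable.mp gmem) _ (hu i)).sub
      (hintc _ (memLp_one_iff_integrable.mp gmem) _ (hw i))).norm.restrict)
  have i3 : Integrable (fun x => ‖g (w i x) - f (w i x)‖) (μ.restrict (S i)) :=
    (((hintc _ (memLp_one_iff_integrable.mp gmem) _ (hw i)).sub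
      (hintc _ hfint _ (hw i))).norm.restrict)
  have i0 : Integrable (fun x => ‖f (u i x) - f (w i x)‖) (μ.restrict (S i)) :=
    (((hintc _ hfint _ (hu i)).sub (hintc _ hfint _ (hw i))).norm.restrict)
  have tri : ∫ x in S i, ‖f (u i x) - f (w i x)‖ ∂μ ≤
      (∫ x in S i, ‖f (u i x) - g (u i x)‖ ∂μ) +
      ((∫ x in S i, ‖g (u i x) - g (w i x)‖ ∂μ) +
      (∫ x in S i, ‖g (w i x) - f (w i x)‖ ∂μ)) := by
    have hb : ∫ x in S i, ‖f (u i x) - f (w i x)‖ ∂μ ≤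
        ∫ x in S i, (‖f (u i x) - g (u i x)‖ +
          (‖g (u i x) - g (w i x)‖ + ‖g (w i x) - f (w i x)‖)) ∂μ := by
      refine integral_mono i0 (i1.add (i2.add i3)) fun x => ?_
      have := dist_triangle4 (f (u i x)) (g (u i x)) (g (w i x)) (f (w i x))
      simpa [dist_eq_norm, add_assoc] using this
    have i23 : Integrable (fun x => ‖g (u i x) - g (w i x)‖ + ‖g (w i x) - f (w i x)‖)
        (μ.restrict (S i)) := i2.add i3
    rwa [integral_add i1 i23, integral_add i2 i3] at hb
  -- bound the three pieces
  have e1 : ∫ x in S i, ‖f (u i x) - g (u i x)‖ ∂μ ≤ ε / 6 :=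
    le_trans (setIntegral_le_integral (hintc _ hfg _ (hu i)).norm
      (Eventually.of_forall fun x => norm_nonneg _)) (hfgnorm _ (hu i))
  have e3 : ∫ x in S i, ‖g (w i x) - f (w i x)‖ ∂μ ≤ ε / 6 := by
    have heq : ∫ x in S i, ‖g (w i x) - f (w i x)‖ ∂μ
        = ∫ x in S i, ‖f (w i x) - g (w i x)‖ ∂μ :=
      integral_congr_ae (Eventually.of_forall fun x => norm_sub_rev _ _)
    rw [heq]
    exact le_trans (setIntegral_le_integral (hintc _ hfg _ (hw i)).norm
      (Eventually.of_forall fun x => norm_nonneg _)) (hfgnorm _ (hw i))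
  have hmono : ∫ x in S i, ‖g (u i x) - g (w i x)‖ ∂μ ≤
      ∫ x in S i, (ε / 6 + C * |u i x - w i x|) ∂μ := by
    refine integral_mono i2 ?_ fun x => hpt i x
    exact ((integrable_const (ε / 6)).add (((hd_int i).const_mul C).restrict))
  have hsplit : ∫ x in S i, (ε / 6 + C * |u i x - w i x|) ∂μ
      = (μ (S i)).toReal * (ε / 6) + C * I := by
    rw [integral_add (integrable_const _) (((hd_int i).const_mul C).restrict),
      setIntegral_const, integral_const_mul, smul_eq_mul, measureReal_def]
  have hmeas1 : (μ (S i)).toReal ≤ 1 := by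
    simpa using ENNReal.toReal_mono ENNReal.one_ne_top (prob_le_one (μ := μ) (s := S i))
  have e2 : ∫ x in S i, ‖g (u i x) - g (w i x)‖ ∂μ ≤ ε / 6 + C * I := by
    rw [hsplit] at hmono
    have h2 : (μ (S i)).toReal * (ε / 6) ≤ ε / 6 := by
      nlinarith [ENNReal.toReal_nonneg (a := μ (S i))]
    linarith
  have hCI : C * I ≤ ε / 6 := by
    have h1 : C * I ≤ C * (ε / (6 * (C + 1))) := mul_le_mul_of_nonneg_left hI.le hC0
    have h2 : C * (ε / (6 * (C + 1))) ≤ ε / 6 := by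
      rw [mul_div_assoc'] ; rw [div_le_div_iff₀ (by positivity) (by norm_num)]
      nlinarith
    linarith
  linarith

/-- A prime system with many self-joinings, Lemma 3.3 (weak mixing criterion).
If an ergodic invertible system on `Z ⊆ [0,1]` with normalized Lebesgue measure admits
sets `A i`, `B i` of measure `> c` along which `T^[n i]` is close to the identity on `A i`
and close to `T` on `B i` (in the `L¹` sense), then every measurable eigenfunction of `T`
is a.e. constant, i.e. `T` is weakly mixing. -/
theorem stmt0
    (Z : Set ℝ) (hZmeas : MeasurableSet Z) (hZsub : Z ⊆ Set.Icc 0 1)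
    (hZpos : 0 < volume Z)
    (μ : Measure ℝ) (hμ : μ = (volume Z)⁻¹ • volume.restrict Z)
    (T : ℝ → ℝ) (hTbij : Function.Bijective T) (hmaps : Set.MapsTo T Z Z)
    (hT : Ergodic T μ)
    (c : ℝ) (hc : 0 < c)
    (n : ℕ → ℕ) (A B : ℕ → Set ℝ)
    (hAmeas : ∀ i, MeasurableSet (A i)) (hBmeas : ∀ i, MeasurableSet (B i))
    (hA : ∀ i, μ (A i) > ENNReal.ofReal c) (hB : ∀ i, μ (B i) > ENNReal.ofReal c)
    (hlimA : Tendsto (fun i => ∫ x in A i, |T^[n i] x - x| ∂μ) atTop (nhds 0))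
    (hlimB : Tendsto (fun i => ∫ x in B i, |T^[n i] x - T x| ∂μ) atTop (nhds 0)) :
    ∀ (f : ℝ → ℂ) (γ : ℂ), Measurable f → MemLp f 2 μ →
      (∀ᵐ x ∂μ, f (T x) = γ * f x) → ∃ k : ℂ, ∀ᵐ x ∂μ, f x = k := by
  intro f γ hfm hf2 hfe
  -- basic facts about the measure
  have hZfin : volume Z ≠ ⊤ := by
    refine ne_top_of_le_ne_top ?_ (measure_mono hZsub)
    simp [Real.volume_Icc]
  have hinv_ne_top : (volume Z)⁻¹ ≠ ⊤ := by
    simp [ENNReal.inv_ne_top, hZpos.ne']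
  haveI hprob : IsProbabilityMeasure μ := by
    constructor
    rw [hμ, Measure.smul_apply, Measure.restrict_apply_univ, smul_eq_mul]
    exact ENNReal.inv_mul_cancel hZpos.ne' hZfin
  haveI hreg : μ.Regular := by
    rw [hμ]
    have : (volume.restrict Z).Regular :=
      MeasureTheory.Measure.Regular.restrict_of_measure_ne_top hZfin
    exact MeasureTheory.Measure.Regular.smul hinv_ne_top
  have hTmp : MeasurePreserving T μ μ := hT.toMeasurePreserving
  have hZae : ∀ᵐ x ∂μ, x ∈ Z := by
    rw [hμ]
    exact Measure.ae_smul_measure (ae_restrict_mem hZmeas) _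
  -- trivial case: f vanishes a.e.
  by_cases hf0 : f =ᵐ[μ] 0
  · exact ⟨0, hf0.mono fun x hx => by simpa using hx⟩
  -- |γ| = 1
  have hfsm : AEStronglyMeasurable f μ := hf2.aestronglyMeasurable
  have hN0 : eLpNorm f 2 μ ≠ 0 := by
    rw [Ne, eLpNorm_eq_zero_iff hfsm (by norm_num)]
    exact hf0
  have hNtop : eLpNorm f 2 μ ≠ ⊤ := hf2.eLpNorm_ne_top
  have hγ1 : ‖γ‖ = 1 := by
    have h1 : eLpNorm (f ∘ T) 2 μ = eLpNorm f 2 μ :=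
      eLpNorm_comp_measurePreserving hfsm hTmp
    have h2 : f ∘ T =ᵐ[μ] (γ • f) := hfe.mono fun x hx => by
      simpa [Function.comp, Pi.smul_apply, smul_eq_mul] using hx
    have h3 : eLpNorm (γ • f) 2 μ = (‖γ‖₊ : ENNReal) * eLpNorm f 2 μ :=
      eLpNorm_const_smul γ f 2 μ
    have h4 : (‖γ‖₊ : ENNReal) * eLpNorm f 2 μ = eLpNorm f 2 μ := by
      rw [← h3, ← eLpNorm_congr_ae h2, h1]
    have h5 : (‖γ‖₊ : ENNReal) = 1 := by
      have := congrArg (· * (eLpNorm f 2 μ)⁻¹) h4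
      simpa [mul_assoc, ENNReal.mul_inv_cancel hN0 hNtop] using this
    have h6 : ‖γ‖₊ = 1 := by exact_mod_cast h5
    have := congrArg NNReal.toReal h6
    simpa [coe_nnnorm] using this
  -- |f| is a.e. constant, equal to some r > 0
  have habsinv : (fun x => ‖f x‖) ∘ T =ᵐ[μ] (fun x => ‖f x‖) := by
    filter_upwards [hfe] with x hx
    simp only [Function.comp]
    rw [hx, norm_mul]
    have : ‖γ‖ = 1 := hγ1
    rw [this, one_mul]
  obtain ⟨r, hr⟩ := hT.ae_eq_const_of_ae_eq_comp_ae
    (continuous_norm.comp_aestronglyMeasurable hfsm) habsinv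
  have hrpos : 0 < r := by
    rcases lt_or_ge 0 r with h | h
    · exact h
    · exfalso
      apply hf0
      filter_upwards [hr] with x hx
      have h0 : ‖f x‖ ≤ 0 := by rw [hx]; exact h
      have := norm_nonneg (f x)
      have : ‖f x‖ = 0 := le_antisymm h0 this
      simpa using this
  -- iterates of the eigenvalue equation
  have hiter : ∀ m : ℕ, ∀ᵐ x ∂μ, f (T^[m] x) = γ ^ m * f x := by
    intro m
    induction m with
    | zero => simp
    | succ m ih =>
      have hpull : ∀ᵐ x ∂μ, f (T^[m] (T x)) = γ ^ m * f (T x) :=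
        hTmp.quasiMeasurePreserving.ae ih
      filter_upwards [hpull, hfe] with x h1 h2
      rw [Function.iterate_succ, Function.comp_apply, h1, h2, pow_succ]
      ring
  -- apply the convergence lemma on both families of sets
  have hTit : ∀ m, MeasurePreserving (T^[m]) μ μ := fun m => hTmp.iterate m
  have hIcc : ∀ a b : ℝ, a ∈ Set.Icc (0:ℝ) 1 → b ∈ Set.Icc (0:ℝ) 1 → |a - b| ≤ 1 := by
    intro a b ha hb
    rw [Set.mem_Icc] at ha hb
    rw [abs_le]
    constructor <;> linarith [ha.1, ha.2, hb.1, hb.2]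
  have hbddA : ∀ i, ∀ᵐ x ∂μ, |T^[n i] x - x| ≤ 1 := by
    intro i
    filter_upwards [hZae] with x hx
    exact hIcc _ _ (hZsub ((hmaps.iterate (n i)) hx)) (hZsub hx)
  have hbddB : ∀ i, ∀ᵐ x ∂μ, |T^[n i] x - T x| ≤ 1 := by
    intro i
    filter_upwards [hZae] with x hx
    exact hIcc _ _ (hZsub ((hmaps.iterate (n i)) hx)) (hZsub (hmaps hx))
  have hf1 : MemLp f 1 μ := hf2.mono_exponent (by norm_num)
  have limA : Tendsto (fun i => ∫ x in A i, ‖f (T^[n i] x) - f x‖ ∂μ) atTop (nhds 0) :=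
    aux_conv f hf1 A hAmeas (fun i => T^[n i]) (fun _ x => x)
      (fun i => hTit (n i)) (fun _ => MeasurePreserving.id μ) hbddA hlimA
  have limB : Tendsto (fun i => ∫ x in B i, ‖f (T^[n i] x) - f (T x)‖ ∂μ) atTop (nhds 0) :=
    aux_conv f hf1 B hBmeas (fun i => T^[n i]) (fun _ x => T x)
      (fun i => hTit (n i)) (fun _ => hTmp) hbddB hlimB
  -- lower bounds on the set integrals
  have hAc : ∀ i, c < (μ (A i)).toReal := fun i =>
    (ENNReal.ofReal_lt_iff_lt_toReal hc.le (measure_ne_top μ _)).mp (hA i)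
  have hBc : ∀ i, c < (μ (B i)).toReal := fun i =>
    (ENNReal.ofReal_lt_iff_lt_toReal hc.le (measure_ne_top μ _)).mp (hB i)
  have key : ∀ i (S : Set ℝ), MeasurableSet S → c < (μ S).toReal → ∀ b : ℂ,
      (∀ᵐ x ∂μ, f (T^[n i] x) - b * f x = (γ ^ n i - b) * f x) →
      ‖γ ^ n i - b‖ * (r * c) ≤ ∫ x in S, ‖f (T^[n i] x) - b * f x‖ ∂μ := by
    intro i S hSmeas hSc b hb
    have hcongr : ∫ x in S, ‖f (T^[n i] x) - b * f x‖ ∂μ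
        = ∫ _ in S, (‖γ ^ n i - b‖ * r) ∂μ := by
      refine setIntegral_congr_ae hSmeas ?_
      filter_upwards [hb, hr] with x h1 h2 _
      rw [h1, norm_mul, h2]
      rfl
    rw [hcongr, setIntegral_const, smul_eq_mul, measureReal_def]
    nlinarith [mul_nonneg (mul_nonneg (norm_nonneg (γ ^ n i - b)) hrpos.le)
      (sub_nonneg.mpr hSc.le), norm_nonneg (γ ^ n i - b), hrpos, hc]
  have tendA : Tendsto (fun i => ‖γ ^ n i - 1‖) atTop (nhds 0) := by
    refine squeeze_zero (fun i => norm_nonneg _) (fun i => ?_) (by simpa using limA.div_const (r * c))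
    rw [le_div_iff₀ (by positivity)]
    have h1 : ∀ᵐ x ∂μ, f (T^[n i] x) - 1 * f x = (γ ^ n i - 1) * f x := by
      filter_upwards [hiter (n i)] with x hx
      rw [hx]; ring
    have := key i (A i) (hAmeas i) (hAc i) 1 h1
    refine this.trans (le_of_eq (integral_congr_ae (Eventually.of_forall fun x => ?_)))
    simp
  have tendB : Tendsto (fun i => ‖γ ^ n i - γ‖) atTop (nhds 0) := by
    refine squeeze_zero (fun i => norm_nonneg _) (fun i => ?_) (by simpa using limB.div_const (r * c))
    rw [le_div_iff₀ (by positivity)]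
    have h1 : ∀ᵐ x ∂μ, f (T^[n i] x) - γ * f x = (γ ^ n i - γ) * f x := by
      filter_upwards [hiter (n i)] with x hx
      rw [hx]; ring
    have := key i (B i) (hBmeas i) (hBc i) γ h1
    refine this.trans (le_of_eq (integral_congr_ae ?_))
    filter_upwards [ae_restrict_of_ae hfe] with x hx
    rw [hx]
  -- conclude γ = 1
  have hγeq : γ = 1 := by
    have hle : ∀ i, ‖γ - 1‖ ≤ ‖γ ^ n i - γ‖ + ‖γ ^ n i - 1‖ := by
      intro i
      calc ‖γ - 1‖ ≤ ‖γ - γ ^ n i‖ + ‖γ ^ n i - 1‖ := by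
            have := dist_triangle γ (γ ^ n i) 1
            simpa [dist_eq_norm] using this
      _ = ‖γ ^ n i - γ‖ + ‖γ ^ n i - 1‖ := by rw [norm_sub_rev]
    have h0 : ‖γ - 1‖ ≤ 0 := by
      have hsum : Tendsto (fun i => ‖γ ^ n i - γ‖ + ‖γ ^ n i - 1‖) atTop (nhds 0) := by
        simpa using tendB.add tendA
      have hconst : Tendsto (fun _ : ℕ => ‖γ - 1‖) atTop (nhds ‖γ - 1‖) := tendsto_const_nhds
      exact le_of_tendsto_of_tendsto' hconst hsum hle
    have := norm_le_zero_iff.mp h0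
    exact sub_eq_zero.mp this
  obtain ⟨k, hk⟩ := hT.ae_eq_const_of_ae_eq_comp_ae hfsm
    (show f ∘ T =ᵐ[μ] f by
      filter_upwards [hfe] with x hx
      simpa [Function.comp, hγeq] using hx)
  exact ⟨k, hk⟩
end

section
/- Let (Z, λ, T) be an ergodic measure-preserving system, let f be an eigenfunction of T with |f| = 1 a.e. and eigenvalue γ on the unit circle. For every ε > 0 there exist δ > 0 and a measurable set U with λ(U) > 1 − ε such that: whenever x, T^n x ∈ U and |T^n x − x| < δ (with Z ⊂ [0,1]), we have |1 − γ^n| < ε. -/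
open MeasureTheory Filter

/-- Lusin-theorem step: for an ergodic system on `Z ⊆ [0,1]` with an eigenfunction `f`
of modulus one and eigenvalue `γ` on the unit circle, for every `ε > 0` there are `δ > 0`
and a set `U` of measure `> 1 - ε` such that whenever `x` and `T^[n] x` both lie in `U`
and `|T^[n] x - x| < δ`, one has `|1 - γ ^ n| < ε`. -/
theorem stmt1
    (Z : Set ℝ) (hZmeas : MeasurableSet Z) (hZsub : Z ⊆ Set.Icc 0 1)
    (hZpos : 0 < volume Z)
    (μ : Measure ℝ) (hμ : μ = (volume Z)⁻¹ • volume.restrict Z)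
    (T : ℝ → ℝ) (hT : Ergodic T μ)
    (f : ℝ → ℂ) (γ : ℂ) (hf : Measurable f)
    (hfabs : ∀ᵐ x ∂μ, ‖f x‖ = 1)
    (hγ : ‖γ‖ = 1)
    (heig : ∀ᵐ x ∂μ, f (T x) = γ * f x) :
    ∀ ε > (0 : ℝ), ∃ δ > (0 : ℝ), ∃ U : Set ℝ, MeasurableSet U ∧
      μ U > 1 - ENNReal.ofReal ε ∧
      ∀ (x : ℝ) (n : ℕ), x ∈ U → T^[n] x ∈ U → |T^[n] x - x| < δ →
        ‖1 - γ ^ n‖ < ε := by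
  intro ε hε
  have hZfin : volume Z ≠ ⊤ := by
    refine ne_of_lt (lt_of_le_of_lt (measure_mono hZsub) ?_)
    simp [Real.volume_Icc]
  have hZne : volume Z ≠ 0 := hZpos.ne'
  subst hμ
  set μ : Measure ℝ := (volume Z)⁻¹ • volume.restrict Z with hμdef
  have hTmeas : Measurable T := hT.toMeasurePreserving.measurable
  haveI : (volume.restrict Z).Regular :=
    MeasureTheory.Measure.Regular.restrict_of_measure_ne_top hZfin
  haveI hreg : μ.Regular := Measure.Regular.smul (by simp [hZne])
  haveI : IsProbabilityMeasure μ := by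
    constructor
    rw [hμdef]
    simp only [Measure.smul_apply, smul_eq_mul, Measure.restrict_apply MeasurableSet.univ,
      Set.univ_inter]
    exact ENNReal.inv_mul_cancel hZne hZfin
  have hZc : μ Zᶜ = 0 := by
    rw [hμdef]
    simp [Measure.restrict_apply hZmeas.compl]
  -- constants
  set c : ℝ := min ε 1 / 2 with hc_def
  have hc : 0 < c := by positivity
  have hcε : c < ε := by
    have : min ε 1 ≤ ε := min_le_left _ _
    simp only [hc_def]; linarith
  have hc1 : c ≤ 1 / 2 := by
    have : min ε 1 ≤ 1 := min_le_right _ _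
    simp only [hc_def]; linarith
  -- f is integrable
  have hfint : Integrable f μ := by
    refine ⟨hf.aestronglyMeasurable, ?_⟩
    have : (∫⁻ x, (‖f x‖₊ : ENNReal) ∂μ) ≤ ∫⁻ _x, (1:ENNReal) ∂μ := by
      refine lintegral_mono_ae (hfabs.mono fun x hx => ?_)
      have : ‖f x‖ = 1 := by rw [hx]
      rw [← enorm_eq_nnnorm, ← ofReal_norm, this]
      simp
    rw [HasFiniteIntegral]
    refine lt_of_le_of_lt this ?_
    simp
  -- continuous approximation
  obtain ⟨g, g_hcs, g_approx, g_cont, -⟩ :=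
    hfint.exists_hasCompactSupport_lintegral_sub_le
      (ε := ENNReal.ofReal (ε / 4) * ENNReal.ofReal c)
      (by
        have h1 : ENNReal.ofReal (ε / 4) ≠ 0 := by
          simp only [ne_eq, ENNReal.ofReal_eq_zero, not_le]; linarith
        have h2 : ENNReal.ofReal c ≠ 0 := by
          simp only [ne_eq, ENNReal.ofReal_eq_zero, not_le]; linarith
        exact mul_ne_zero h1 h2)
  -- the good set for approximation
  set G : Set ℝ := {x | ‖f x - g x‖ < ε / 4} with hG_def
  have hGmeas : MeasurableSet G := by
    have : Measurable fun x => ‖f x - g x‖ :=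
      continuous_norm.measurable.comp (hf.sub g_cont.measurable)
    exact measurableSet_lt this measurable_const
  -- Markov inequality
  have hGc : μ Gᶜ ≤ ENNReal.ofReal c := by
    have hsub : Gᶜ ⊆ {x | ENNReal.ofReal (ε / 4) ≤ (‖f x - g x‖₊ : ENNReal)} := by
      intro x hx
      simp only [hG_def, Set.mem_compl_iff, Set.mem_setOf_eq, not_lt] at hx
      have : ENNReal.ofReal (ε / 4) ≤ ENNReal.ofReal ‖f x - g x‖ := by
        exact ENNReal.ofReal_le_ofReal hx
      rwa [ofReal_norm] at this
    have markov := mul_meas_ge_le_lintegral₀ (μ := μ)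
      ((hf.sub g_cont.measurable).enorm.aemeasurable) (ENNReal.ofReal (ε / 4))
    have h1 : ENNReal.ofReal (ε / 4) * μ Gᶜ ≤
        ENNReal.ofReal (ε / 4) * ENNReal.ofReal c := by
      refine le_trans ?_ (le_trans markov g_approx)
      exact mul_le_mul_right (measure_mono hsub) _
    have hne : ENNReal.ofReal (ε / 4) ≠ 0 := by
      simp [ENNReal.ofReal_eq_zero]; linarith
    exact (ENNReal.mul_le_mul_iff_right hne ENNReal.ofReal_ne_top).1 h1
  -- the eigenfunction full-measure set
  set A : Set ℝ := {x | f (T x) = γ * f x ∧ ‖f x‖ = 1} with hA_def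
  have hAmeas : MeasurableSet A := by
    have h1 : MeasurableSet {x | f (T x) = γ * f x} :=
      measurableSet_eq_fun (hf.comp hTmeas) (hf.const_mul γ)
    have h2 : MeasurableSet {x | ‖f x‖ = 1} :=
      (continuous_norm.measurable.comp hf) (measurableSet_singleton 1)
    have : A = {x | f (T x) = γ * f x} ∩ {x | ‖f x‖ = 1} := by
      ext x; simp [hA_def]
    rw [this]; exact h1.inter h2
  have hAc : μ Aᶜ = 0 := by
    have := heig.and hfabs
    rw [Filter.eventually_iff, mem_ae_iff] at this
    exact this
  set S : Set ℝ := ⋂ n, T^[n] ⁻¹' A with hS_def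
  have hSmeas : MeasurableSet S :=
    MeasurableSet.iInter fun n => hAmeas.preimage (hTmeas.iterate n)
  have hSc : μ Sᶜ = 0 := by
    rw [hS_def, Set.compl_iInter]
    refine measure_iUnion_null fun n => ?_
    rw [← Set.preimage_compl,
      (hT.toMeasurePreserving.iterate n).measure_preimage hAmeas.compl.nullMeasurableSet]
    exact hAc
  have hSprop : ∀ x ∈ S, ∀ n : ℕ, f (T^[n] x) = γ ^ n * f x := by
    intro x hx n
    induction n with
    | zero => simp
    | succ n ih =>
        have hxA : T^[n] x ∈ A := Set.mem_iInter.1 hx n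
        rw [Function.iterate_succ_apply', hxA.1, ih, pow_succ]
        ring
  -- uniform continuity of g
  obtain ⟨δ, hδ, hδuc⟩ := Metric.uniformContinuous_iff.mp
    (g_hcs.uniformContinuous_of_continuous g_cont) (ε / 4) (by linarith)
  refine ⟨δ, hδ, (Z ∩ G) ∩ S, ((hZmeas.inter hGmeas).inter hSmeas), ?_, ?_⟩
  · -- measure bound
    have hμU : μ ((Z ∩ G) ∩ S) = μ G := by
      rw [measure_inter_conull hSc, Set.inter_comm, measure_inter_conull hZc]
    have hGlb : 1 - ENNReal.ofReal c ≤ μ G := by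
      rw [tsub_le_iff_right]
      calc (1 : ENNReal) = μ Set.univ := (measure_univ (μ := μ)).symm
        _ = μ G + μ Gᶜ := (measure_add_measure_compl hGmeas).symm
        _ ≤ μ G + ENNReal.ofReal c := add_le_add_right hGc _
    have key : 1 - ENNReal.ofReal ε < 1 - ENNReal.ofReal c := by
      rcases le_or_gt 1 (ENNReal.ofReal ε) with h | h
      · rw [tsub_eq_zero_of_le h]
        have : ENNReal.ofReal c ≤ ENNReal.ofReal (1/2) := ENNReal.ofReal_le_ofReal hc1
        refine tsub_pos_of_lt (lt_of_le_of_lt this ?_)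
        rw [show ((1:ENNReal)) = ENNReal.ofReal 1 by simp]
        exact ENNReal.ofReal_lt_ofReal_iff one_pos |>.2 (by norm_num)
      · have hε1 : ε < 1 := by
          by_contra hcon
          push_neg at hcon
          exact absurd (le_trans (by simp) (ENNReal.ofReal_le_ofReal hcon)) (not_le.2 h)
        rw [show ((1:ENNReal)) = ENNReal.ofReal 1 by simp, ← ENNReal.ofReal_sub _ hε.le,
          ← ENNReal.ofReal_sub _ hc.le]
        exact (ENNReal.ofReal_lt_ofReal_iff (by linarith)).2 (by linarith)
    rw [hμU]
    exact lt_of_lt_of_le key hGlb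
  · -- the pointwise estimate
    intro x n hxU hTU hdist
    have hxS : x ∈ S := hxU.2
    have hfx1 : ‖f x‖ = 1 := by
      have := Set.mem_iInter.1 hxS 0
      simpa using this.2
    have heq : ‖1 - γ ^ n‖ = ‖f (T^[n] x) - f x‖ := by
      rw [hSprop x hxS n]
      have : γ ^ n * f x - f x = (γ ^ n - 1) * f x := by ring
      rw [this, norm_mul, hfx1, mul_one, norm_sub_rev]
    rw [heq]
    have h1 : ‖f (T^[n] x) - g (T^[n] x)‖ < ε / 4 := hTU.1.2
    have h3 : ‖g x - f x‖ < ε / 4 := by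
      have := hxU.1.2
      rw [hG_def] at this
      rw [norm_sub_rev]
      exact this
    have h2 : ‖g (T^[n] x) - g x‖ < ε / 4 := by
      have := hδuc (a := T^[n] x) (b := x) (by rwa [Real.dist_eq])
      rwa [Complex.dist_eq] at this
    calc ‖f (T^[n] x) - f x‖
        ≤ ‖f (T^[n] x) - g (T^[n] x)‖ + ‖g (T^[n] x) - g x‖
            + ‖g x - f x‖ := by
          have : f (T^[n] x) - f x = (f (T^[n] x) - g (T^[n] x)) + (g (T^[n] x) - g x)
              + (g x - f x) := by ring
          rw [this]
          exact le_trans (norm_add_le _ _)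
            (add_le_add_left (norm_add_le _ _) _)
      _ < ε / 4 + ε / 4 + ε / 4 := by linarith
      _ < ε := by linarith
end

section
/- For every ε > 0 there exists k₀ such that for all k ≥ k₀: 8^{(1−ε)·10^k} < r_{10^k−1} < 8^{(1+ε)·10^k}, where (r_n) is any sequence of positive reals satisfying r_{ℓ+1} = 8·r_ℓ − 1 for all ℓ ∉ E = {10^j : j ≥ 2}, and 1 ≤ r_{ℓ+1}/r_ℓ ≤ 8 for all ℓ, with r_1 ≥ 2. -/
/-- Growth rate of the heights sequence: for a sequence of positive reals with
`r (ℓ+1) = 8 r ℓ - 1` off the sparse set `E = {10^j : j ≥ 2}`, ratios between `1` and `8`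
everywhere, and `r 1 ≥ 2`, for every `ε > 0` and all large `k` one has
`8^{(1-ε)·10^k} < r (10^k - 1) < 8^{(1+ε)·10^k}`. -/
theorem stmt7
    (E : Set ℕ) (hE : E = {n | ∃ j : ℕ, 2 ≤ j ∧ n = 10 ^ j})
    (r : ℕ → ℝ) (hpos : ∀ n, 0 < r n) (hr1 : 2 ≤ r 1)
    (hrec : ∀ ℓ, ℓ ∉ E → r (ℓ + 1) = 8 * r ℓ - 1)
    (hratio : ∀ ℓ, 1 ≤ r (ℓ + 1) / r ℓ ∧ r (ℓ + 1) / r ℓ ≤ 8) :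
    ∀ ε > (0 : ℝ), ∃ k₀ : ℕ, ∀ k ≥ k₀,
      (8 : ℝ) ^ ((1 - ε) * (10 : ℝ) ^ k) < r (10 ^ k - 1) ∧
      r (10 ^ k - 1) < (8 : ℝ) ^ ((1 + ε) * (10 : ℝ) ^ k) := by
  classical
  intro ε hε
  -- basic monotonicity facts
  have hmono : ∀ n, r n ≤ r (n + 1) := by
    intro n
    have := (hratio n).1
    rw [le_div_iff₀ (hpos n)] at this
    linarith
  have hub : ∀ n, r (n + 1) ≤ 8 * r n := by
    intro n
    have := (hratio n).2
    rw [div_le_iff₀ (hpos n)] at this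
    linarith
  have hmono' : ∀ m n, m ≤ n → r m ≤ r n := by
    intro m n h
    induction n, h using Nat.le_induction with
    | base => exact le_rfl
    | succ n hn ih => exact ih.trans (hmono n)
  have hr2 : ∀ n, 1 ≤ n → 2 ≤ r n := fun n hn => le_trans hr1 (hmono' 1 n hn)
  -- counting function for exceptional indices
  set c : ℕ → ℕ := fun n => ((Finset.range n).filter (fun m => m ∈ E)).card with hc
  -- key lower bound
  have key : ∀ n, 1 ≤ n → (8 : ℝ) ^ (n - 1) ≤ (r n - 1 / 7) * 8 ^ (c n) := by
    intro n hn
    induction n, hn using Nat.le_induction with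
    | base =>
      have h1 : (1 : ℝ) ≤ 8 ^ (c 1) := one_le_pow₀ (by norm_num)
      simp only [Nat.sub_self, pow_zero]
      nlinarith
    | succ n hn ih =>
      have hcn : c (n + 1) = if n ∈ E then c n + 1 else c n := by
        simp only [hc, Finset.range_add_one, Finset.filter_insert]
        split
        · rw [Finset.card_insert_of_notMem (by simp)]
        · rfl
      have hpowpos : (0 : ℝ) < 8 ^ (c n) := by positivity
      have hexp : n + 1 - 1 = (n - 1) + 1 := by omega
      rw [hexp, pow_succ]
      have hsn : (13 : ℝ) / 7 ≤ r n - 1 / 7 := by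
        have := hr2 n hn; linarith
      by_cases hnE : n ∈ E
      · rw [hcn, if_pos hnE, pow_succ]
        have hrm := hmono n
        nlinarith
      · rw [hcn, if_neg hnE]
        have hre := hrec n hnE
        nlinarith
  -- upper bound
  have upper : ∀ n, 1 ≤ n → r n ≤ r 1 * 8 ^ (n - 1) := by
    intro n hn
    induction n, hn using Nat.le_induction with
    | base => simp
    | succ n hn ih =>
      have hexp : n + 1 - 1 = (n - 1) + 1 := by omega
      rw [hexp, pow_succ]
      have := hub n
      nlinarith [hpos n, hpos 1]
  -- counting bound
  have hcount : ∀ k : ℕ, c (10 ^ k - 1) ≤ k := by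
    intro k
    have hsub : (Finset.range (10 ^ k - 1)).filter (fun m => m ∈ E) ⊆
        (Finset.range k).image (fun j => 10 ^ j) := by
      intro m hm
      simp only [Finset.mem_filter, Finset.mem_range] at hm
      obtain ⟨hmlt, hmE⟩ := hm
      rw [hE] at hmE
      obtain ⟨j, _, rfl⟩ := hmE
      simp only [Finset.mem_image, Finset.mem_range]
      refine ⟨j, ?_, rfl⟩
      have h10 : (10 : ℕ) ^ j < 10 ^ k := lt_of_lt_of_le hmlt (Nat.sub_le _ _)
      exact (Nat.pow_lt_pow_iff_right (by norm_num)).mp h10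
    calc c (10 ^ k - 1) ≤ ((Finset.range k).image (fun j => 10 ^ j)).card :=
          Finset.card_le_card hsub
      _ ≤ (Finset.range k).card := Finset.card_image_le
      _ = k := Finset.card_range k
  -- pick constants
  obtain ⟨M, hM⟩ : ∃ M : ℕ, r 1 < 8 ^ M := pow_unbounded_of_one_lt (r 1) (by norm_num)
  obtain ⟨K, hK⟩ : ∃ K : ℕ, ((M : ℝ) + 4) / ε < 5 ^ K :=
    pow_unbounded_of_one_lt _ (by norm_num)
  refine ⟨max K 1, fun k hk => ?_⟩
  have hk1 : 1 ≤ k := le_trans (le_max_right K 1) hk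
  have hkK : K ≤ k := le_trans (le_max_left K 1) hk
  have h5 : (M : ℝ) + 4 < ε * 5 ^ k := by
    have h5le : (5 : ℝ) ^ K ≤ 5 ^ k := pow_le_pow_right₀ (by norm_num) hkK
    have := hK.trans_le h5le
    rw [div_lt_iff₀ hε] at this
    linarith
  have h2k : (k : ℝ) < 2 ^ k := by
    exact_mod_cast (Nat.lt_two_pow_self : k < 2 ^ k)
  have h2k1 : (2 : ℝ) ≤ 2 ^ k := by
    calc (2 : ℝ) = 2 ^ 1 := by norm_num
      _ ≤ 2 ^ k := pow_le_pow_right₀ (by norm_num) hk1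
  have h10eq : (10 : ℝ) ^ k = 2 ^ k * 5 ^ k := by
    rw [← mul_pow]; norm_num
  have h5pos : (0 : ℝ) < 5 ^ k := by positivity
  have h2pos : (0 : ℝ) < 2 ^ k := by positivity
  -- (B) : k + 2 < ε * 10^k
  have hB : (k : ℝ) + 2 < ε * 10 ^ k := by
    rw [h10eq]
    nlinarith
  -- (A) : M ≤ ε * 10^k
  have hA : (M : ℝ) ≤ ε * 10 ^ k := by
    rw [h10eq]
    nlinarith
  set N : ℕ := 10 ^ k - 1 with hN
  have hN2 : 2 ≤ 10 ^ k := by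
    calc 2 ≤ 10 ^ 1 := by norm_num
      _ ≤ 10 ^ k := Nat.pow_le_pow_right (by norm_num) hk1
  have hN1 : 1 ≤ N := by omega
  have hNcast : ((N - 1 : ℕ) : ℝ) = (10 : ℝ) ^ k - 2 := by
    have : N - 1 = 10 ^ k - 2 := by omega
    rw [this]
    push_cast [Nat.cast_sub hN2]
    ring
  -- lower bound
  have hlow : (8 : ℝ) ^ ((1 - ε) * (10 : ℝ) ^ k) < r N := by
    have hkey := key N hN1
    have hcN := hcount k
    have h8c : (8 : ℝ) ^ (c N) ≤ 8 ^ k := pow_le_pow_right₀ (by norm_num) hcN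
    have h8cpos : (0 : ℝ) < 8 ^ (c N) := by positivity
    have h8kpos : (0 : ℝ) < (8 : ℝ) ^ k := by positivity
    have hs : (8 : ℝ) ^ (N - 1) / 8 ^ k ≤ r N - 1 / 7 := by
      rw [div_le_iff₀ h8kpos]
      have hsn : (0 : ℝ) ≤ r N - 1 / 7 := by
        have := hr2 N hN1; linarith
      calc (8 : ℝ) ^ (N - 1) ≤ (r N - 1 / 7) * 8 ^ (c N) := hkey
        _ ≤ (r N - 1 / 7) * 8 ^ k := by nlinarith
    have hrpow : (8 : ℝ) ^ ((1 - ε) * (10 : ℝ) ^ k) < (8 : ℝ) ^ (N - 1) / 8 ^ k := by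
      have e1 : ((8 : ℝ) ^ (N - 1) : ℝ) = (8 : ℝ) ^ (((N - 1 : ℕ) : ℝ)) := by
        rw [Real.rpow_natCast]
      have e2 : ((8 : ℝ) ^ k : ℝ) = (8 : ℝ) ^ ((k : ℝ)) := by
        rw [Real.rpow_natCast]
      rw [e1, e2, ← Real.rpow_sub (by norm_num)]
      apply Real.rpow_lt_rpow_of_exponent_lt (by norm_num)
      rw [hNcast]
      linarith
    linarith
  have hhigh : r N < (8 : ℝ) ^ ((1 + ε) * (10 : ℝ) ^ k) := by
    have hup := upper N hN1
    have hNm1 : N - 1 = 10 ^ k - 2 := by omega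
    have hrhs : (8 : ℝ) ^ ((1 + ε) * (10 : ℝ) ^ k) =
        (8 : ℝ) ^ (((N - 1 : ℕ) : ℝ)) * (8 : ℝ) ^ (ε * (10 : ℝ) ^ k + 2) := by
      rw [← Real.rpow_add (by norm_num), hNcast]
      ring_nf
    have h1 : r 1 < (8 : ℝ) ^ (ε * (10 : ℝ) ^ k + 2) := by
      have : ((8 : ℝ) ^ M : ℝ) = (8 : ℝ) ^ ((M : ℝ)) := by rw [Real.rpow_natCast]
      calc r 1 < (8 : ℝ) ^ M := hM
        _ = (8 : ℝ) ^ ((M : ℝ)) := this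
        _ ≤ (8 : ℝ) ^ (ε * (10 : ℝ) ^ k + 2) := by
            apply Real.rpow_le_rpow_of_exponent_le (by norm_num)
            linarith
    have hpows : (0 : ℝ) < (8 : ℝ) ^ (((N - 1 : ℕ) : ℝ)) := Real.rpow_pos_of_pos (by norm_num) _
    have e1 : ((8 : ℝ) ^ (N - 1) : ℝ) = (8 : ℝ) ^ (((N - 1 : ℕ) : ℝ)) := by
      rw [Real.rpow_natCast]
    rw [hrhs]
    calc r N ≤ r 1 * 8 ^ (N - 1) := hup
      _ = r 1 * (8 : ℝ) ^ (((N - 1 : ℕ) : ℝ)) := by rw [e1]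
      _ < (8 : ℝ) ^ (ε * (10 : ℝ) ^ k + 2) * (8 : ℝ) ^ (((N - 1 : ℕ) : ℝ)) := by
          apply mul_lt_mul_of_pos_right h1 hpows
      _ = (8 : ℝ) ^ (((N - 1 : ℕ) : ℝ)) * (8 : ℝ) ^ (ε * (10 : ℝ) ^ k + 2) := by ring
  exact ⟨hlow, hhigh⟩
end

section
/- There exists a universal constant C such that the following holds. Let F_1,...,F_K be i.i.d. {0,1}-valued random variables on a probability space (Ω, μ) with p = μ(F_i = 0) satisfying δ/K ≤ p ≤ 1 − δ/K for some δ > 0, and let H(ω) = ∑_{i=1}^K F_i(ω). Then H is min{δ²/C, 1/C}-spread, where H is called η-spread if μ(⋃_{i η-spread} H^{−1}(i)) > η, and an integer i is (H, η)-spread if max{μ(H^{−1}(i+1)), μ(H^{−1}(i−1))} > η·μ(H^{−1}(i)). -/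
open MeasureTheory ProbabilityTheory


lemma choose_sq_le (K a b : ℕ) (hK : K = a + b + 2) :
    K.choose (a+1) ^ 2 ≤ 4 * (K.choose (a+2) * K.choose a) := by
  have h1 : K.choose (a+2) * (a+2) = K.choose (a+1) * (b+1) := by
    have h := Nat.choose_succ_right_eq K (a+1)
    rwa [show K - (a+1) = b+1 by omega] at h
  have h2 : K.choose (a+1) * (a+1) = K.choose a * (b+2) := by
    have h := Nat.choose_succ_right_eq K a
    rwa [show K - a = b+2 by omega] at h
  have h3 : K.choose (a+1) ^ 2 * ((a+2)*(b+2)) ≤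
      (4 * (K.choose (a+2) * K.choose a)) * ((a+2)*(b+2)) := by
    calc K.choose (a+1) ^ 2 * ((a+2)*(b+2))
        ≤ K.choose (a+1) ^ 2 * (4*((b+1)*(a+1))) :=
          Nat.mul_le_mul_left _ (by nlinarith)
      _ = 4 * ((K.choose (a+1)*(b+1)) * (K.choose (a+1)*(a+1))) := by ring
      _ = 4 * ((K.choose (a+2)*(a+2)) * (K.choose a*(b+2))) := by rw [h1, h2]
      _ = (4 * (K.choose (a+2) * K.choose a)) * ((a+2)*(b+2)) := by ring
  exact Nat.le_of_mul_le_mul_right h3 (by positivity)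


lemma binom_dist {Ω : Type} [MeasurableSpace Ω] (μ : Measure Ω) [IsProbabilityMeasure μ]
    (K : ℕ) (F : Fin K → Ω → ℤ)
    (hmeas : ∀ i, Measurable (F i)) (h01 : ∀ i ω, F i ω = 0 ∨ F i ω = 1)
    (hind : iIndepFun F μ)
    (p q : ℝ) (hq : q = 1 - p) (hp0 : 0 ≤ p) (hq0 : 0 ≤ q)
    (hP : ∀ i, μ {ω | F i ω = 0} = ENNReal.ofReal p)
    (n : ℕ) :
    μ {ω | (∑ i, F i ω) = (n : ℤ)} =
      ENNReal.ofReal ((K.choose n : ℝ) * q ^ n * p ^ (K - n)) := by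
  have hQ : ∀ i, μ {ω | F i ω = 1} = ENNReal.ofReal q := by
    intro i
    have hset : {ω | F i ω = 1} = {ω | F i ω = 0}ᶜ := by
      ext ω; rcases h01 i ω with h | h <;> simp [h]
    have hm : MeasurableSet {ω | F i ω = 0} := (hmeas i) (measurableSet_singleton 0)
    rw [hset, prob_compl_eq_one_sub hm, hP i, hq, ENNReal.ofReal_sub 1 hp0,
      ENNReal.ofReal_one]
  set E : Finset (Fin K) → Set Ω :=
    fun S => {ω | ∀ i, F i ω = if i ∈ S then 1 else 0} with hE
  have hEeq : ∀ S, E S = ⋂ i, F i ⁻¹' {if i ∈ S then 1 else 0} := by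
    intro S; ext ω; simp [hE, Set.mem_iInter]
  have hEmeas : ∀ S, MeasurableSet (E S) := by
    intro S; rw [hEeq]
    exact MeasurableSet.iInter fun i => (hmeas i) (measurableSet_singleton _)
  have hEμ : ∀ S : Finset (Fin K),
      μ (E S) = ENNReal.ofReal q ^ S.card * ENNReal.ofReal p ^ (K - S.card) := by
    intro S
    have h1 : μ (⋂ i ∈ Finset.univ, F i ⁻¹' {if i ∈ S then (1:ℤ) else 0}) =
        ∏ i, μ (F i ⁻¹' {if i ∈ S then (1:ℤ) else 0}) :=
      hind.measure_inter_preimage_eq_mul Finset.univ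
        (fun i _ => measurableSet_singleton _)
    rw [hEeq]
    have h2 : (⋂ i, F i ⁻¹' {if i ∈ S then (1:ℤ) else 0}) =
        ⋂ i ∈ Finset.univ, F i ⁻¹' {if i ∈ S then (1:ℤ) else 0} := by simp
    rw [h2, h1]
    have h3 : ∀ i : Fin K, μ (F i ⁻¹' {if i ∈ S then (1:ℤ) else 0}) =
        if i ∈ S then ENNReal.ofReal q else ENNReal.ofReal p := by
      intro i
      by_cases h : i ∈ S
      · simpa [h, Set.preimage, Set.mem_singleton_iff] using hQ i
      · simpa [h, Set.preimage, Set.mem_singleton_iff] using hP i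
    rw [Finset.prod_congr rfl fun i _ => h3 i, Finset.prod_ite,
      Finset.prod_const, Finset.prod_const]
    congr 1
    · congr 1; simp
    · congr 1
      rw [show (Finset.univ.filter fun i => ¬ i ∈ S) = Sᶜ by ext; simp,
        Finset.card_compl, Fintype.card_fin]
  have key : ∀ ω, (∑ i, F i ω) =
      (((Finset.univ.filter fun i => F i ω = 1).card : ℕ) : ℤ) := by
    intro ω
    calc ∑ i, F i ω = ∑ i, (if F i ω = 1 then (1:ℤ) else 0) :=
          Finset.sum_congr rfl fun i _ => by rcases h01 i ω with h | h <;> simp [h]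
      _ = _ := by rw [Finset.sum_boole]
  have hseteq : {ω | (∑ i, F i ω) = (n : ℤ)} =
      ⋃ S ∈ Finset.powersetCard n (Finset.univ : Finset (Fin K)), E S := by
    ext ω
    simp only [Set.mem_setOf_eq, Set.mem_iUnion, Finset.mem_powersetCard, hE]
    constructor
    · intro h
      refine ⟨Finset.univ.filter fun i => F i ω = 1, ⟨Finset.subset_univ _, ?_⟩, ?_⟩
      · have := (key ω).symm.trans h
        exact_mod_cast this
      · intro i
        by_cases hi : F i ω = 1
        · simp [hi]
        · rcases h01 i ω with h0 | h0
          · simp [hi, h0]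
          · exact absurd h0 hi
    · rintro ⟨S, ⟨-, hcard⟩, hpat⟩
      calc ∑ i, F i ω = ∑ i, (if i ∈ S then (1:ℤ) else 0) :=
            Finset.sum_congr rfl fun i _ => hpat i
        _ = (S.card : ℤ) := by rw [Finset.sum_boole]; simp
        _ = (n : ℤ) := by exact_mod_cast hcard
  have hdisj : (Finset.powersetCard n (Finset.univ : Finset (Fin K)) : Set (Finset (Fin K))).PairwiseDisjoint E := by
    intro S _ T _ hST
    rw [Function.onFun, Set.disjoint_left]
    intro ω hSω hTω
    apply hST
    have hmem : ∀ U : Finset (Fin K), (∀ i, F i ω = if i ∈ U then 1 else 0) →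
        ∀ i, i ∈ U ↔ F i ω = 1 := by
      intro U hU i
      constructor
      · intro h; rw [hU i, if_pos h]
      · intro h; by_contra hc
        rw [hU i, if_neg hc] at h; norm_num at h
    ext i
    rw [hmem S hSω i, hmem T hTω i]
  rw [hseteq, measure_biUnion_finset hdisj fun S _ => hEmeas S]
  rw [Finset.sum_congr rfl fun S hS => by
    rw [hEμ S, (Finset.mem_powersetCard.1 hS).2]]
  rw [Finset.sum_const, Finset.card_powersetCard, Finset.card_univ, Fintype.card_fin,
    nsmul_eq_mul]
  rw [← ENNReal.ofReal_pow hq0, ← ENNReal.ofReal_pow hp0, ← ENNReal.ofReal_natCast,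
    ← ENNReal.ofReal_mul (by positivity), ← ENNReal.ofReal_mul (by positivity)]
  rw [mul_assoc]

lemma max_half_aux {x y z e : ℝ} (hx : 0 < x) (hy : 0 < y) (hz : 0 < z)
    (he : e ≤ 1/4) (hsq : x ^ 2 ≤ 4 * (y * z)) : e * x < max y z := by
  have hmax : x / 2 ≤ max y z := by
    by_contra h
    push_neg at h
    have h2 : y < x / 2 := lt_of_le_of_lt (le_max_left _ _) h
    have h3 : z < x / 2 := lt_of_le_of_lt (le_max_right _ _) h
    nlinarith
  nlinarith


/-- Spread property of binomial sums: there is a universal constant `C` such that for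
i.i.d. `{0,1}`-valued random variables `F i` with `p = μ(F i = 0)` satisfying
`δ/K ≤ p ≤ 1 - δ/K`, the sum `H = ∑ F i` is `min{δ²/C, 1/C}`-spread: the set of values
`j` for which an adjacent value `j ± 1` carries at least `min{δ²/C, 1/C}` times the mass
of `j` has total `H`-mass greater than `min{δ²/C, 1/C}`. -/
theorem stmt9 :
    ∃ C : ℝ, 0 < C ∧
      ∀ (Ω : Type) (_ : MeasurableSpace Ω) (μ : Measure Ω), IsProbabilityMeasure μ →
      ∀ (K : ℕ) (hK : 0 < K) (F : Fin K → Ω → ℤ),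
        (∀ i, Measurable (F i)) →
        (∀ i ω, F i ω = 0 ∨ F i ω = 1) →
        iIndepFun F μ →
        (∀ i, IdentDistrib (F i) (F ⟨0, hK⟩) μ μ) →
        ∀ (δ p : ℝ), 0 < δ →
          μ {ω | F ⟨0, hK⟩ ω = 0} = ENNReal.ofReal p →
          δ / K ≤ p → p ≤ 1 - δ / K →
          μ {ω | ∃ j : ℤ, (∑ i, F i ω) = j ∧
              max (μ {ω' | (∑ i, F i ω') = j + 1}) (μ {ω' | (∑ i, F i ω') = j - 1})
                > ENNReal.ofReal (min (δ ^ 2 / C) (1 / C)) * μ {ω' | (∑ i, F i ω') = j}}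
            > ENNReal.ofReal (min (δ ^ 2 / C) (1 / C)) := by
  refine ⟨4, by norm_num, ?_⟩
  intro Ω mΩ μ hμ K hK F hmeas h01 hind hid δ p hδ hμp hp1 hp2
  set η : ℝ := min (δ ^ 2 / 4) (1 / 4) with hηdef
  have hK0 : (0:ℝ) < K := by exact_mod_cast hK
  have hδK : 0 < δ / K := div_pos hδ hK0
  have hp0 : 0 < p := lt_of_lt_of_le hδK hp1
  set q : ℝ := 1 - p with hqdef
  have hq0 : 0 < q := by rw [hqdef]; linarith
  have hKq : δ ≤ K * q := by
    have h : δ / K ≤ q := by rw [hqdef]; linarith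
    calc δ = K * (δ / K) := by field_simp
      _ ≤ K * q := mul_le_mul_of_nonneg_left h hK0.le
  have hKp : δ ≤ K * p := by
    calc δ = K * (δ / K) := by field_simp
      _ ≤ K * p := mul_le_mul_of_nonneg_left hp1 hK0.le
  have hη0 : 0 < η := lt_min (by positivity) (by norm_num)
  have hη14 : η ≤ 1/4 := min_le_right _ _
  have hηδ : η < δ := by
    rcases le_or_gt δ 1 with h | h
    · have : η ≤ δ^2/4 := min_le_left _ _
      nlinarith
    · linarith
  clear_value η q
  have hp' : ∀ i, μ {ω | F i ω = 0} = ENNReal.ofReal p := fun i =>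
    ((hid i).measure_mem_eq (measurableSet_singleton (0:ℤ))).trans hμp
  have hdist := binom_dist μ K F hmeas h01 hind p q hqdef hp0.le hq0.le hp'
  set A : ℕ → ℝ := fun n => (K.choose n : ℝ) * q ^ n * p ^ (K - n) with hA
  clear_value A
  have hApos : ∀ n, n ≤ K → 0 < A n := by
    intro n hn
    have hc : 0 < (K.choose n : ℝ) := by exact_mod_cast Nat.choose_pos hn
    rw [hA]; positivity
  have hdistj : ∀ (j : ℤ) (n : ℕ), j = (n:ℤ) →
      μ {ω | (∑ i, F i ω) = j} = ENNReal.ofReal (A n) := by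
    intro j n h; subst h; rw [hA]; exact hdist n
  have hlow : ∀ ω, 0 ≤ ∑ i, F i ω := fun ω =>
    Finset.sum_nonneg fun i _ => by rcases h01 i ω with h | h <;> simp [h]
  have hhigh : ∀ ω, (∑ i, F i ω) ≤ (K:ℤ) := by
    intro ω
    calc (∑ i, F i ω) ≤ ∑ _i : Fin K, (1:ℤ) :=
          Finset.sum_le_sum fun i _ => by rcases h01 i ω with h | h <;> simp [h]
      _ = (K:ℤ) := by simp
  have hzero : ∀ j : ℤ, (j < 0 ∨ (K:ℤ) < j) → μ {ω | (∑ i, F i ω) = j} = 0 := by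
    intro j hj
    convert measure_empty (μ := μ)
    ext ω
    simp only [Set.mem_setOf_eq, Set.mem_empty_iff_false, iff_false]
    intro h
    have h1 := hlow ω; have h2 := hhigh ω
    omega
  have hmain : ∀ ω, ∃ j : ℤ, (∑ i, F i ω) = j ∧
      max (μ {ω' | (∑ i, F i ω') = j + 1}) (μ {ω' | (∑ i, F i ω') = j - 1})
        > ENNReal.ofReal η * μ {ω' | (∑ i, F i ω') = j} := by
    intro ω
    obtain ⟨n, hnK, hn⟩ : ∃ n : ℕ, n ≤ K ∧ (∑ i, F i ω) = (n:ℤ) := by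
      have h1 := hlow ω; have h2 := hhigh ω
      exact ⟨(∑ i, F i ω).toNat, by omega, by omega⟩
    refine ⟨(n:ℤ), hn, ?_⟩
    rw [hdistj _ n rfl, ← ENNReal.ofReal_mul hη0.le]
    rcases Nat.eq_zero_or_pos n with rfl | hn1
    · -- n = 0
      rw [hzero (((0:ℕ):ℤ) - 1) (Or.inl (by norm_num)), hdistj (((0:ℕ):ℤ) + 1) 1 (by norm_num)]
      rw [max_eq_left zero_le]
      have hA0 : A 0 = p ^ K := by simp [hA]
      have hA1 : A 1 = (K:ℝ) * q * p ^ (K - 1) := by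
        simp [hA, Nat.choose_one_right]
      have hpK : p ^ K = p * p ^ (K - 1) := by
        rw [← pow_succ']; congr 1; omega
      apply (ENNReal.ofReal_lt_ofReal_iff (by rw [hA1]; positivity)).2
      rw [hA0, hA1, hpK]
      have hX : (0:ℝ) < p ^ (K - 1) := by positivity
      nlinarith [mul_lt_mul_of_pos_right (show η * p < K * q by nlinarith) hX]
    · rcases eq_or_lt_of_le hnK with rfl | hnK'
      · -- n = K
        rw [hzero ((n:ℤ) + 1) (Or.inr (by omega)), hdistj ((n:ℤ) - 1) (n-1) (by omega)]
        rw [max_eq_right zero_le]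
        have hAK : A n = q ^ n := by simp [hA]
        have hAK1 : A (n-1) = (n:ℝ) * q ^ (n - 1) * p := by
          simp only [hA]
          have h1 : n.choose (n-1) = n := by
            rw [show n - 1 = n - (n - (n-1)) by omega]
            rw [Nat.choose_symm (by omega), show n - (n-1) = 1 by omega,
              Nat.choose_one_right]
          rw [h1, show n - (n-1) = 1 by omega, pow_one]
        have hqK : q ^ n = q * q ^ (n - 1) := by
          rw [← pow_succ']; congr 1; omega
        have hncast : (0:ℝ) < n := by exact_mod_cast hn1
        apply (ENNReal.ofReal_lt_ofReal_iff (by rw [hAK1]; positivity)).2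
        rw [hAK, hAK1, hqK]
        have hX : (0:ℝ) < q ^ (n - 1) := by positivity
        have hn0 : δ ≤ (n:ℝ) * p := hKp
        nlinarith [mul_lt_mul_of_pos_right (show η * q < (n:ℝ) * p by nlinarith) hX]
      · -- interior
        obtain ⟨a, rfl⟩ : ∃ a, n = a + 1 := ⟨n - 1, by omega⟩
        obtain ⟨b, rfl⟩ : ∃ b, K = a + b + 2 := ⟨K - a - 2, by omega⟩
        rw [hdistj (((a+1:ℕ):ℤ) + 1) (a+2) (by omega), hdistj (((a+1:ℕ):ℤ) - 1) a (by omega)]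
        have e1 : A (a+1) = ((a+b+2).choose (a+1) : ℝ) * (q^(a+1) * p^(b+1)) := by
          simp only [hA, show a+b+2-(a+1) = b+1 by omega]; ring
        have e2 : A (a+2) = ((a+b+2).choose (a+2) : ℝ) * (q^(a+2) * p^b) := by
          simp only [hA, show a+b+2-(a+2) = b by omega]; ring
        have e3 : A a = ((a+b+2).choose a : ℝ) * (q^a * p^(b+2)) := by
          simp only [hA, show a+b+2-a = b+2 by omega]; ring
        have hc' : ((a+b+2).choose (a+1) : ℝ) ^ 2 ≤
            4 * ((a+b+2).choose (a+2) * (a+b+2).choose a) := by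
          exact_mod_cast choose_sq_le (a+b+2) a b rfl
        have hsq : A (a+1) ^ 2 ≤ 4 * (A (a+2) * A a) := by
          rw [e1, e2, e3]
          calc (((a+b+2).choose (a+1) : ℝ) * (q^(a+1) * p^(b+1)))^2
              = ((a+b+2).choose (a+1) : ℝ)^2 * (q^(a+1) * p^(b+1))^2 := by ring
            _ ≤ 4 * (((a+b+2).choose (a+2) : ℝ) * ((a+b+2).choose a : ℝ)) * (q^(a+1) * p^(b+1))^2 :=
                mul_le_mul_of_nonneg_right hc' (by positivity)
            _ = 4 * ((((a+b+2).choose (a+2) : ℝ) * (q^(a+2) * p^b)) * (((a+b+2).choose a : ℝ) * (q^a * p^(b+2)))) := by ring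
        have hA1 : 0 < A (a+1) := hApos (a+1) (by omega)
        have hA2 : 0 < A (a+2) := hApos (a+2) (by omega)
        have hA3 : 0 < A a := hApos a (by omega)
        have hreal : η * A (a+1) < max (A (a+2)) (A a) :=
          max_half_aux hA1 hA2 hA3 hη14 hsq
        rcases le_total (A a) (A (a+2)) with h | h
        · rw [max_eq_left (ENNReal.ofReal_le_ofReal h)]
          refine (ENNReal.ofReal_lt_ofReal_iff hA2).2 ?_
          rwa [max_eq_left h] at hreal
        · rw [max_eq_right (ENNReal.ofReal_le_ofReal h)]
          refine (ENNReal.ofReal_lt_ofReal_iff hA3).2 ?_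
          rwa [max_eq_right h] at hreal
  have hset : {ω | ∃ j : ℤ, (∑ i, F i ω) = j ∧
      max (μ {ω' | (∑ i, F i ω') = j + 1}) (μ {ω' | (∑ i, F i ω') = j - 1})
        > ENNReal.ofReal η * μ {ω' | (∑ i, F i ω') = j}} = Set.univ :=
    Set.eq_univ_of_forall hmain
  rw [hset, measure_univ]
  exact ENNReal.ofReal_lt_one.2 (by linarith)
end

section
/- Let K, n be positive integers with 1 ≤ n+1 ≤ K, let 0 < p ≤ 1/2, and consider the binomial probabilities b(n) = C(K,n) p^n (1−p)^{K−n}. Then b(n+1)/b(n) = ((K−n)/(n+1)) · p/(1−p). Moreover, if Kp ≥ 9 and n ∈ [Kp/3, 5Kp/3], then b(n+1)/b(n) ≥ min{1/99, Kp/99}. -/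
/-- Ratio of consecutive binomial probabilities: with
`b n = C(K,n) p^n (1-p)^{K-n}`, one has `b(n+1)/b(n) = ((K-n)/(n+1))·p/(1-p)`;
moreover if `Kp ≥ 9` and `n ∈ [Kp/3, 5Kp/3]` then `b(n+1)/b(n) ≥ min{1/99, Kp/99}`. -/
theorem stmt10 (K n : ℕ) (hn : n + 1 ≤ K) (p : ℝ) (hp : 0 < p) (hp2 : p ≤ 1 / 2)
    (b : ℕ → ℝ) (hb : ∀ m, b m = (K.choose m : ℝ) * p ^ m * (1 - p) ^ (K - m)) :
    b (n + 1) / b n = ((K - n : ℝ) / (n + 1)) * (p / (1 - p)) ∧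
    (9 ≤ K * p → K * p / 3 ≤ (n : ℝ) → (n : ℝ) ≤ 5 * (K * p) / 3 →
      b (n + 1) / b n ≥ min (1 / 99) (K * p / 99)) := by
  have hnK : n ≤ K := by omega
  have hp1 : (0:ℝ) < 1 - p := by linarith
  have hcn : (0:ℝ) < (K.choose n : ℝ) := by
    exact_mod_cast Nat.choose_pos hnK
  have key : (K.choose (n+1) : ℝ) * (n+1) = (K.choose n : ℝ) * ((K:ℝ) - n) := by
    have h := Nat.choose_succ_right_eq K n
    have h2 : ((K.choose (n+1) * (n+1) : ℕ) : ℝ) = ((K.choose n * (K - n) : ℕ) : ℝ) := by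
      exact_mod_cast congrArg (Nat.cast : ℕ → ℝ) h
    push_cast [Nat.cast_sub hnK] at h2
    linarith
  have he : K - n = (K - (n+1)) + 1 := by omega
  have hpn : (0:ℝ) < p ^ n := pow_pos hp n
  have hqe : (0:ℝ) < (1-p) ^ (K - (n+1)) := pow_pos hp1 _
  have hmain : b (n + 1) / b n = ((K - n : ℝ) / (n + 1)) * (p / (1 - p)) := by
    rw [hb, hb, he, pow_succ, pow_succ]
    have hn1 : (0:ℝ) < (n:ℝ) + 1 := by positivity
    field_simp
    linear_combination key
  refine ⟨hmain, ?_⟩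
  intro h9 hlo hhi
  rw [hmain]
  have hK2 : (n:ℝ) + 1 ≤ 16/9 * (K * p) := by nlinarith
  have hKp : (K:ℝ) * p ≤ (K:ℝ) / 2 := by
    nlinarith [Nat.cast_nonneg (α := ℝ) K]
  have hKn : (K:ℝ)/6 ≤ (K:ℝ) - n := by linarith
  have hmin : min (1/99 : ℝ) (K * p / 99) = 1/99 := by
    rw [min_eq_left]; linarith
  rw [hmin, ge_iff_le, div_mul_div_comm, le_div_iff₀ (by positivity)]
  nlinarith [mul_pos hp (show (0:ℝ) < K by nlinarith)]
end
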